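/- With the setup above, if E[‖E[X|Y] − X‖²] = E[‖D(Y) − X‖²] (i.e., D achieves the MMSE), and E[⟨σξ, D(Y) − Y⟩] ≠ 0, then δ_opt² = 1; equivalently, E[‖D(Y) − Y‖²] = −E[⟨σξ, D(Y) − Y⟩]. -/

import Mathlib

open MeasureTheory ProbabilityTheory

section Aux

set_option linter.unusedSectionVars false

variable {α E : Type*} [NormedAddCommGroup E] [InnerProductSpace ℝ E] [CompleteSpace E]
  {m m0 : MeasurableSpace α} {μ : @Measure α m0} [IsFiniteMeasure μ]

lemma aux_condExpL2_toLp_ae_eq_condexp (hm : m ≤ m0) (f : α → E) (hf : MemLp f 2 μ) :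
    (condExpL2 E ℝ hm (hf.toLp f) : α → E) =ᵐ[μ] μ[f | m] := by
  refine ae_eq_condExp_of_forall_setIntegral_eq hm (hf.integrable one_le_two) ?_ ?_ ?_
  · intro s _ _
    exact (integrable_condExpL2_of_isFiniteMeasure hm).integrableOn
  · intro s hs hμs
    rw [integral_condExpL2_eq hm (hf.toLp f) hs hμs.ne]
    exact setIntegral_congr_ae (hm s hs) ((hf.coeFn_toLp).mono fun x hx _ => hx)
  · exact lpMeas.aestronglyMeasurable (condExpL2 E ℝ hm (hf.toLp f))

lemma aux_memℒp_condexp (hm : m ≤ m0) (f : α → E) (hf : MemLp f 2 μ) :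
    MemLp (μ[f | m]) 2 μ :=
  (Lp.memLp ((condExpL2 E ℝ hm (hf.toLp f) : α →₂[μ] E))).ae_eq
    (aux_condExpL2_toLp_ae_eq_condexp hm f hf)

lemma aux_integrable_inner {f g : α → E} (hf : MemLp f 2 μ) (hg : MemLp g 2 μ) :
    Integrable (fun ω => (inner ℝ (f ω) (g ω) : ℝ)) μ := by
  refine (L2.integrable_inner (𝕜 := ℝ) (hf.toLp f) (hg.toLp g)).congr ?_
  filter_upwards [hf.coeFn_toLp, hg.coeFn_toLp] with ω h1 h2
  rw [h1, h2]

lemma aux_integral_inner_condexp (hm : m ≤ m0) {f g : α → E}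
    (hf : MemLp f 2 μ) (hfm : AEStronglyMeasurable[m] f μ) (hg : MemLp g 2 μ) :
    ∫ ω, (inner ℝ (f ω) (g ω) : ℝ) ∂μ = ∫ ω, (inner ℝ (f ω) ((μ[g | m]) ω) : ℝ) ∂μ := by
  have hF := hf.coeFn_toLp
  have hG := hg.coeFn_toLp
  have hC := aux_condExpL2_toLp_ae_eq_condexp hm g hg
  have hfm' : AEStronglyMeasurable[m] (hf.toLp f : α → E) μ := hfm.congr hF.symm
  have h1 : (inner ℝ ((condExpL2 E ℝ hm (hg.toLp g) : α →₂[μ] E)) (hf.toLp f) : ℝ)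
      = inner ℝ (hg.toLp g) (hf.toLp f) :=
    inner_condExpL2_eq_inner_fun hm (hg.toLp g) (hf.toLp f) hfm'
  rw [L2.inner_def, L2.inner_def] at h1
  calc ∫ ω, (inner ℝ (f ω) (g ω) : ℝ) ∂μ
      = ∫ ω, (inner ℝ ((hg.toLp g : α → E) ω) ((hf.toLp f : α → E) ω) : ℝ) ∂μ := by
        refine integral_congr_ae ?_
        filter_upwards [hF, hG] with ω h1 h2
        rw [h1, h2, real_inner_comm]
    _ = ∫ ω, (inner ℝ ((condExpL2 E ℝ hm (hg.toLp g) : α → E) ω) ((hf.toLp f : α → E) ω) : ℝ) ∂μ :=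
        h1.symm
    _ = ∫ ω, (inner ℝ (f ω) ((μ[g | m]) ω) : ℝ) ∂μ := by
        refine integral_congr_ae ?_
        filter_upwards [hF, hC] with ω h1 h2
        rw [h1, h2, real_inner_comm]

end Aux

/-- If `D` achieves the MMSE, i.e. `E[‖E[X|Y] − X‖²] = E[‖D(Y) − X‖²]`, and
`E[⟨σξ, D(Y) − Y⟩] ≠ 0`, then `δ_opt² = 1`, i.e.
`E[‖D(Y) − Y‖²] = −E[⟨σξ, D(Y) − Y⟩]`. -/
theorem mmse_attained_implies_delta_opt_one
    (n : ℕ) (Ω : Type*) [MeasurableSpace Ω] (μ : Measure Ω) [IsProbabilityMeasure μ]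
    (X ξ : Ω → EuclideanSpace ℝ (Fin n))
    (hXmeas : Measurable X) (hξmeas : Measurable ξ)
    (hX2 : MemLp X 2 μ) (hξ2 : MemLp ξ 2 μ)
    (hindep : IndepFun X ξ μ)
    (hξgauss : iIndepFun (fun i ω => ξ ω i) μ ∧
      ∀ i : Fin n, Measure.map (fun ω => ξ ω i) μ = gaussianReal 0 1)
    (σ : ℝ) (hσ : 0 < σ)
    (Y : Ω → EuclideanSpace ℝ (Fin n)) (hY : ∀ ω, Y ω = X ω + σ • ξ ω)
    (D : EuclideanSpace ℝ (Fin n) → EuclideanSpace ℝ (Fin n)) (hDmeas : Measurable D)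
    (hD2 : MemLp (fun ω => D (Y ω)) 2 μ)
    (L : ℝ → ℝ)
    (hL : ∀ δ : ℝ, L δ = ∫ ω, ‖Y ω + (δ ^ 2)⁻¹ • (D (Y ω) - Y ω) - X ω‖ ^ 2 ∂μ)
    (a b : ℝ)
    (ha : a = ∫ ω, ‖D (Y ω) - Y ω‖ ^ 2 ∂μ)
    (hb : b = ∫ ω, inner ℝ (σ • ξ ω) (D (Y ω) - Y ω) ∂μ)
    (hb0 : b ≠ 0) (ha0 : 0 < a)
    (hmmse : ∫ ω, ‖(μ[X | MeasurableSpace.comap Y inferInstance]) ω - X ω‖ ^ 2 ∂μ =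
      ∫ ω, ‖D (Y ω) - X ω‖ ^ 2 ∂μ) :
    -a / b = 1 ∧ a = -b := by
  have hYfun : Y = fun ω => X ω + σ • ξ ω := funext hY
  have hYmeas : Measurable Y := by
    rw [hYfun]; exact hXmeas.add (hξmeas.const_smul σ)
  have hm : MeasurableSpace.comap Y inferInstance ≤ ‹MeasurableSpace Ω› := hYmeas.comap_le
  set m : MeasurableSpace Ω := MeasurableSpace.comap Y inferInstance with hm_def
  have hYm : Measurable[m] Y := measurable_iff_comap_le.mpr le_rfl
  have hY2 : MemLp Y 2 μ := by rw [hYfun]; exact hX2.add (hξ2.const_smul σ)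
  set C : Ω → EuclideanSpace ℝ (Fin n) := μ[X | m] with hC_def
  have hC2 : MemLp C 2 μ := aux_memℒp_condexp hm X hX2
  set W : Ω → EuclideanSpace ℝ (Fin n) := fun ω => D (Y ω) - Y ω with hW_def
  have hW2 : MemLp W 2 μ := hD2.sub hY2
  have hDYm : Measurable[m] fun ω => D (Y ω) := hDmeas.comp hYm
  have hWm : AEStronglyMeasurable[m] W μ :=
    StronglyMeasurable.aestronglyMeasurable ((hDYm.sub hYm).stronglyMeasurable)
  -- Step 1 : D ∘ Y =ᵐ C
  set u : Ω → EuclideanSpace ℝ (Fin n) := fun ω => D (Y ω) - C ω with hu_def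
  have hu2 : MemLp u 2 μ := hD2.sub hC2
  have hum : AEStronglyMeasurable[m] u μ :=
    StronglyMeasurable.aestronglyMeasurable
      (hDYm.stronglyMeasurable.sub stronglyMeasurable_condExp)
  have hcross : ∫ ω, (inner ℝ (u ω) (C ω - X ω) : ℝ) ∂μ = 0 := by
    have h1 : ∫ ω, (inner ℝ (u ω) (X ω) : ℝ) ∂μ = ∫ ω, (inner ℝ (u ω) (C ω) : ℝ) ∂μ :=
      aux_integral_inner_condexp hm hu2 hum hX2
    have h2 : ∫ ω, (inner ℝ (u ω) (C ω - X ω) : ℝ) ∂μ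
        = ∫ ω, (inner ℝ (u ω) (C ω) : ℝ) ∂μ - ∫ ω, (inner ℝ (u ω) (X ω) : ℝ) ∂μ := by
      rw [← integral_sub (aux_integrable_inner hu2 hC2) (aux_integrable_inner hu2 hX2)]
      congr 1; funext ω; rw [inner_sub_right]
    rw [h2, h1, sub_self]
  have h_int_u : Integrable (fun ω => ‖u ω‖ ^ 2) μ := by
    refine (aux_integrable_inner hu2 hu2).congr (Filter.Eventually.of_forall fun ω => ?_)
    simp only [real_inner_self_eq_norm_sq]
  have h_int_v : Integrable (fun ω => ‖C ω - X ω‖ ^ 2) μ := by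
    refine (aux_integrable_inner (hC2.sub hX2) (hC2.sub hX2)).congr
      (Filter.Eventually.of_forall fun ω => ?_)
    simp only [Pi.sub_apply, real_inner_self_eq_norm_sq]
  have hexpand : ∫ ω, ‖D (Y ω) - X ω‖ ^ 2 ∂μ
      = ∫ ω, ‖u ω‖ ^ 2 ∂μ + ∫ ω, ‖C ω - X ω‖ ^ 2 ∂μ := by
    have hpt : ∀ ω, ‖D (Y ω) - X ω‖ ^ 2
        = ‖u ω‖ ^ 2 + 2 * (inner ℝ (u ω) (C ω - X ω) : ℝ) + ‖C ω - X ω‖ ^ 2 := by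
      intro ω
      have h : D (Y ω) - X ω = u ω + (C ω - X ω) := by
        rw [show u ω = D (Y ω) - C ω from rfl]; abel
      rw [h, norm_add_sq_real]
    calc ∫ ω, ‖D (Y ω) - X ω‖ ^ 2 ∂μ
        = ∫ ω, (‖u ω‖ ^ 2 + 2 * (inner ℝ (u ω) (C ω - X ω) : ℝ) + ‖C ω - X ω‖ ^ 2) ∂μ := by
          exact integral_congr_ae (Filter.Eventually.of_forall hpt)
      _ = ∫ ω, ‖u ω‖ ^ 2 ∂μ + 2 * ∫ ω, (inner ℝ (u ω) (C ω - X ω) : ℝ) ∂μ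
            + ∫ ω, ‖C ω - X ω‖ ^ 2 ∂μ := by
          have hi2 : Integrable (fun ω => 2 * (inner ℝ (u ω) (C ω - X ω) : ℝ)) μ := by
            exact (aux_integrable_inner hu2 (hC2.sub hX2)).const_mul 2
          have hi1 : Integrable
              (fun ω => ‖u ω‖ ^ 2 + 2 * (inner ℝ (u ω) (C ω - X ω) : ℝ)) μ := h_int_u.add hi2
          rw [integral_add hi1 h_int_v, integral_add h_int_u hi2, integral_const_mul]
      _ = ∫ ω, ‖u ω‖ ^ 2 ∂μ + ∫ ω, ‖C ω - X ω‖ ^ 2 ∂μ := by rw [hcross]; ring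
  have hu_zero : ∫ ω, ‖u ω‖ ^ 2 ∂μ = 0 := by linarith [hexpand, hmmse]
  have hDYC : (fun ω => D (Y ω)) =ᵐ[μ] C := by
    have h0 : (fun ω => ‖u ω‖ ^ 2) =ᵐ[μ] 0 :=
      (integral_eq_zero_iff_of_nonneg (fun ω => sq_nonneg _) h_int_u).mp hu_zero
    filter_upwards [h0] with ω hω
    have h1 : ‖u ω‖ ^ 2 = 0 := hω
    have h2 : u ω = 0 := by rwa [pow_eq_zero_iff two_ne_zero, norm_eq_zero] at h1
    have h3 : D (Y ω) - C ω = 0 := h2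
    exact sub_eq_zero.mp h3
  -- Step 2 : b = -a
  have hXW : ∫ ω, (inner ℝ (W ω) (X ω) : ℝ) ∂μ = ∫ ω, (inner ℝ (W ω) (C ω) : ℝ) ∂μ :=
    aux_integral_inner_condexp hm hW2 hWm hX2
  have hb_eq : b = -a := by
    have e1 : b = ∫ ω, (inner ℝ (Y ω - X ω) (W ω) : ℝ) ∂μ := by
      rw [hb]
      refine integral_congr_ae (Filter.Eventually.of_forall fun ω => ?_)
      show (inner ℝ (σ • ξ ω) (D (Y ω) - Y ω) : ℝ) = (inner ℝ (Y ω - X ω) (D (Y ω) - Y ω) : ℝ)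
      rw [show σ • ξ ω = Y ω - X ω from by rw [hY ω]; abel]
    have e2 : ∫ ω, (inner ℝ (Y ω - X ω) (W ω) : ℝ) ∂μ
        = ∫ ω, (inner ℝ (Y ω) (W ω) : ℝ) ∂μ - ∫ ω, (inner ℝ (X ω) (W ω) : ℝ) ∂μ := by
      rw [← integral_sub (aux_integrable_inner hY2 hW2) (aux_integrable_inner hX2 hW2)]
      exact integral_congr_ae (Filter.Eventually.of_forall fun ω => by
        simp only [inner_sub_left])
    have e3 : ∫ ω, (inner ℝ (X ω) (W ω) : ℝ) ∂μ = ∫ ω, (inner ℝ (D (Y ω)) (W ω) : ℝ) ∂μ := by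
      calc ∫ ω, (inner ℝ (X ω) (W ω) : ℝ) ∂μ
          = ∫ ω, (inner ℝ (W ω) (X ω) : ℝ) ∂μ :=
            integral_congr_ae (Filter.Eventually.of_forall fun ω => real_inner_comm _ _)
        _ = ∫ ω, (inner ℝ (W ω) (C ω) : ℝ) ∂μ := hXW
        _ = ∫ ω, (inner ℝ (D (Y ω)) (W ω) : ℝ) ∂μ := by
            refine integral_congr_ae ?_
            filter_upwards [hDYC] with ω hω
            rw [← hω, real_inner_comm]
    have e4 : ∫ ω, (inner ℝ (Y ω) (W ω) : ℝ) ∂μ - ∫ ω, (inner ℝ (D (Y ω)) (W ω) : ℝ) ∂μ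
        = ∫ ω, (inner ℝ (Y ω - D (Y ω)) (W ω) : ℝ) ∂μ := by
      rw [← integral_sub (aux_integrable_inner hY2 hW2) (aux_integrable_inner hD2 hW2)]
      exact integral_congr_ae (Filter.Eventually.of_forall fun ω => by
        simp only [inner_sub_left])
    have e5 : ∫ ω, (inner ℝ (Y ω - D (Y ω)) (W ω) : ℝ) ∂μ = -a := by
      rw [ha, ← integral_neg]
      refine integral_congr_ae (Filter.Eventually.of_forall fun ω => ?_)
      show (inner ℝ (Y ω - D (Y ω)) (D (Y ω) - Y ω) : ℝ) = -‖D (Y ω) - Y ω‖ ^ 2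
      rw [show Y ω - D (Y ω) = -(D (Y ω) - Y ω) from by abel, inner_neg_left,
        real_inner_self_eq_norm_sq]
    rw [e1, e2, e3, e4, e5]
  refine ⟨?_, by linarith⟩
  rw [hb_eq, neg_div_neg_eq, div_self (ne_of_gt ha0)]
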